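/- Let $\mathfrak{m} = \mathfrak{g}_{-1}\oplus\mathfrak{g}_{-2}$ be a fundamental graded Lie algebra of the second kind over a field $\K$ of characteristic zero, i.e. $\mathfrak{g}_{-1}$ is finite-dimensional, $[\mathfrak{g}_{-1},\mathfrak{g}_{-1}] = \mathfrak{g}_{-2} \neq 0$, and $[\mathfrak{g}_{-1},\mathfrak{g}_{-2}]=[\mathfrak{g}_{-2},\mathfrak{g}_{-2}]=0$. If $\dim\mathfrak{g}_{-2} \le 2$, then the maximal effective $\mathfrak{gl}(\mathfrak{g}_{-1})$-prolongation of $\mathfrak{m}$ is infinite-dimensional. -/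

import Mathlib

/-- An effective (ℤ-graded) prolongation of type `gl(V)` of the fundamental
graded Lie algebra of the second kind `m = V ⊕ W` with bracket `lam`. -/
structure EffProlong (K V W : Type) [Field K]
    [AddCommGroup V] [Module K V] [AddCommGroup W] [Module K W]
    (lam : V →ₗ[K] V →ₗ[K] W) where
  L : Type
  [lieRing : LieRing L]
  [lieAlg : LieAlgebra K L]
  g : ℤ → Submodule K L
  internal : DirectSum.IsInternal g
  grading : ∀ i j : ℤ, ∀ x ∈ g i, ∀ y ∈ g j, ⁅x, y⁆ ∈ g (i + j)
  bounded : ∀ p : ℤ, p < -2 → g p = ⊥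
  e1 : V →ₗ[K] L
  e2 : W →ₗ[K] L
  e1_inj : Function.Injective e1
  e2_inj : Function.Injective e2
  e1_range : LinearMap.range e1 = g (-1)
  e2_range : LinearMap.range e2 = g (-2)
  bracket_eq : ∀ v w : V, ⁅e1 v, e1 w⁆ = e2 (lam v w)
  effective : ∀ p : ℤ, 0 ≤ p → ∀ x ∈ g p, (∀ v : V, ⁅x, e1 v⁆ = 0) → x = 0

attribute [instance] EffProlong.lieRing EffProlong.lieAlg


attribute [instance] EffProlong.lieRing EffProlong.lieAlg

/-- The underlying Lie algebra of the prolongation is finite dimensional. -/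
def EffProlong.FinDim {K V W : Type} [Field K]
    [AddCommGroup V] [Module K V] [AddCommGroup W] [Module K W]
    {lam : V →ₗ[K] V →ₗ[K] W} (S : EffProlong K V W lam) : Prop :=
  FiniteDimensional K S.L

open Polynomial

section Core
variable {K V W E : Type} [Field K] [AddCommGroup V] [Module K V]
  [AddCommGroup W] [Module K W] [Field E] [Algebra K E]
variable (lam : V →ₗ[K] V →ₗ[K] W) (ze : E →ₗ[K] V) (xi : V →ₗ[K] E)

private lemma divX_smulE (c : E) (p : Polynomial E) : (c • p).divX = c • p.divX := by
  ext n; simp [coeff_divX]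

private lemma divX_smulK (c : K) (p : Polynomial E) : (c • p).divX = c • p.divX := by
  ext n; simp [coeff_divX]

private lemma divX_sub' (p q : Polynomial E) : (p - q).divX = p.divX - q.divX := by
  ext n; simp [coeff_divX, coeff_sub]

noncomputable def br (x y : W × V × Polynomial E) : W × V × Polynomial E :=
  (lam x.2.1 y.2.1,
   ze (x.2.2.coeff 0 * xi y.2.1 - y.2.2.coeff 0 * xi x.2.1),
   xi y.2.1 • x.2.2.divX - xi x.2.1 • y.2.2.divX)

variable (halt : ∀ v : V, lam v v = 0)
  (hxz : ∀ γ : E, xi (ze γ) = 0)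
  (hsym : ∀ (α : E) (u v : V), lam (ze (α * xi u)) v = lam (ze (α * xi v)) u)

include halt in
private lemma lam_skew (u v : V) : lam u v = - lam v u := by
  have h := halt (u + v)
  simp only [map_add, LinearMap.add_apply, halt u, halt v] at h
  rw [eq_neg_iff_add_eq_zero]
  linear_combination (norm := abel) h

private lemma br_add_left (x y z : W × V × Polynomial E) :
    br lam ze xi (x + y) z = br lam ze xi x z + br lam ze xi y z := by
  obtain ⟨w1, v1, f1⟩ := x; obtain ⟨w2, v2, f2⟩ := y; obtain ⟨w3, v3, f3⟩ := z
  refine Prod.ext ?_ (Prod.ext ?_ ?_)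
  · show lam (v1 + v2) v3 = lam v1 v3 + lam v2 v3
    rw [map_add]; rfl
  · show ze ((f1 + f2).coeff 0 * xi v3 - f3.coeff 0 * xi (v1 + v2)) =
      ze (f1.coeff 0 * xi v3 - f3.coeff 0 * xi v1) +
      ze (f2.coeff 0 * xi v3 - f3.coeff 0 * xi v2)
    rw [coeff_add, map_add xi, ← map_add ze]; congr 1; ring
  · show xi v3 • (f1 + f2).divX - xi (v1 + v2) • f3.divX =
      (xi v3 • f1.divX - xi v1 • f3.divX) + (xi v3 • f2.divX - xi v2 • f3.divX)
    rw [divX_add, map_add xi, smul_add, add_smul]; abel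

private lemma br_add_right (x y z : W × V × Polynomial E) :
    br lam ze xi x (y + z) = br lam ze xi x y + br lam ze xi x z := by
  obtain ⟨w1, v1, f1⟩ := x; obtain ⟨w2, v2, f2⟩ := y; obtain ⟨w3, v3, f3⟩ := z
  refine Prod.ext ?_ (Prod.ext ?_ ?_)
  · show lam v1 (v2 + v3) = lam v1 v2 + lam v1 v3
    rw [map_add]
  · show ze (f1.coeff 0 * xi (v2 + v3) - (f2 + f3).coeff 0 * xi v1) =
      ze (f1.coeff 0 * xi v2 - f2.coeff 0 * xi v1) +
      ze (f1.coeff 0 * xi v3 - f3.coeff 0 * xi v1)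
    rw [coeff_add, map_add xi, ← map_add ze]; congr 1; ring
  · show xi (v2 + v3) • f1.divX - xi v1 • (f2 + f3).divX =
      (xi v2 • f1.divX - xi v1 • f2.divX) + (xi v3 • f1.divX - xi v1 • f3.divX)
    rw [divX_add, map_add xi, smul_add, add_smul]; abel

include halt in
private lemma br_self (x : W × V × Polynomial E) : br lam ze xi x x = 0 := by
  obtain ⟨w1, v1, f1⟩ := x
  refine Prod.ext ?_ (Prod.ext ?_ ?_)
  · exact halt v1
  · show ze (f1.coeff 0 * xi v1 - f1.coeff 0 * xi v1) = 0
    rw [sub_self, map_zero]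
  · show xi v1 • f1.divX - xi v1 • f1.divX = 0
    rw [sub_self]

private lemma br_smul (c : K) (x y : W × V × Polynomial E) :
    br lam ze xi x (c • y) = c • br lam ze xi x y := by
  obtain ⟨w1, v1, f1⟩ := x; obtain ⟨w2, v2, f2⟩ := y
  refine Prod.ext ?_ (Prod.ext ?_ ?_)
  · show lam v1 (c • v2) = c • lam v1 v2
    rw [map_smul]
  · show ze (f1.coeff 0 * xi (c • v2) - (c • f2).coeff 0 * xi v1) =
      c • ze (f1.coeff 0 * xi v2 - f2.coeff 0 * xi v1)
    rw [map_smul xi, coeff_smul, ← map_smul ze]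
    congr 1
    rw [smul_sub, mul_smul_comm, smul_mul_assoc]
  · show xi (c • v2) • f1.divX - xi v1 • (c • f2).divX =
      c • (xi v2 • f1.divX - xi v1 • f2.divX)
    rw [map_smul xi, divX_smulK, smul_assoc, smul_comm (xi v1) c, smul_sub]

include halt hxz hsym in
private lemma br_leibniz (x y z : W × V × Polynomial E) :
    br lam ze xi x (br lam ze xi y z) =
      br lam ze xi (br lam ze xi x y) z + br lam ze xi y (br lam ze xi x z) := by
  obtain ⟨w1, v1, f1⟩ := x; obtain ⟨w2, v2, f2⟩ := y; obtain ⟨w3, v3, f3⟩ := z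
  have sk := lam_skew lam halt
  refine Prod.ext ?_ (Prod.ext ?_ ?_)
  · show lam v1 (ze (f2.coeff 0 * xi v3 - f3.coeff 0 * xi v2)) =
      lam (ze (f1.coeff 0 * xi v2 - f2.coeff 0 * xi v1)) v3 +
      lam v2 (ze (f1.coeff 0 * xi v3 - f3.coeff 0 * xi v1))
    have h1 : lam v1 (ze (f2.coeff 0 * xi v3)) = - lam (ze (f2.coeff 0 * xi v1)) v3 := by
      rw [sk v1, hsym]
    have h2 : lam v1 (ze (f3.coeff 0 * xi v2)) = - lam (ze (f3.coeff 0 * xi v1)) v2 := by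
      rw [sk v1, hsym]
    have h3 : lam v2 (ze (f1.coeff 0 * xi v3)) = - lam (ze (f1.coeff 0 * xi v2)) v3 := by
      rw [sk v2, hsym]
    have h4 : lam v2 (ze (f3.coeff 0 * xi v1)) = - lam (ze (f3.coeff 0 * xi v1)) v2 := by
      rw [sk v2]
    simp only [map_sub, LinearMap.sub_apply, h1, h2, h3, h4]
    abel
  · show ze (f1.coeff 0 * xi (ze (f2.coeff 0 * xi v3 - f3.coeff 0 * xi v2)) -
        (xi v3 • f2.divX - xi v2 • f3.divX).coeff 0 * xi v1) =
      ze ((xi v2 • f1.divX - xi v1 • f2.divX).coeff 0 * xi v3 -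
        f3.coeff 0 * xi (ze (f1.coeff 0 * xi v2 - f2.coeff 0 * xi v1))) +
      ze (f2.coeff 0 * xi (ze (f1.coeff 0 * xi v3 - f3.coeff 0 * xi v1)) -
        (xi v3 • f1.divX - xi v1 • f3.divX).coeff 0 * xi v2)
    simp only [hxz, mul_zero, zero_mul, sub_zero, zero_sub, coeff_sub, coeff_smul,
      coeff_divX, smul_eq_mul, ← map_add, ← map_neg, ← map_sub]
    congr 1; ring
  · show xi (ze (f2.coeff 0 * xi v3 - f3.coeff 0 * xi v2)) • f1.divX -
        xi v1 • (xi v3 • f2.divX - xi v2 • f3.divX).divX =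
      (xi v3 • (xi v2 • f1.divX - xi v1 • f2.divX).divX -
        xi (ze (f1.coeff 0 * xi v2 - f2.coeff 0 * xi v1)) • f3.divX) +
      (xi (ze (f1.coeff 0 * xi v3 - f3.coeff 0 * xi v1)) • f2.divX -
        xi v2 • (xi v3 • f1.divX - xi v1 • f3.divX).divX)
    simp only [hxz, zero_smul, divX_sub', divX_smulE, smul_sub, smul_smul,
      zero_sub, sub_zero]
    module

noncomputable def coreLieRing : LieRing (W × V × Polynomial E) :=
  { (inferInstance : AddCommGroup (W × V × Polynomial E)) with
    bracket := br lam ze xi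
    add_lie := br_add_left lam ze xi
    lie_add := br_add_right lam ze xi
    lie_self := br_self lam ze xi halt
    leibniz_lie := br_leibniz lam ze xi halt hxz hsym }

noncomputable def coreLieAlgebra :
    @LieAlgebra K (W × V × Polynomial E) _ (coreLieRing lam ze xi halt hxz hsym) :=
  letI := coreLieRing lam ze xi halt hxz hsym
  { toModule := (inferInstance : Module K (W × V × Polynomial E))
    lie_smul := fun c x y => br_smul lam ze xi c x y }

/-- degree `-2` piece -/
noncomputable def gW : Submodule K (W × V × Polynomial E) :=
  (⊤ : Submodule K W).prod ((⊥ : Submodule K V).prod (⊥ : Submodule K (Polynomial E)))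

/-- degree `-1` piece -/
noncomputable def gV : Submodule K (W × V × Polynomial E) :=
  (⊥ : Submodule K W).prod ((⊤ : Submodule K V).prod (⊥ : Submodule K (Polynomial E)))

/-- single-monomial submodule of polynomials -/
def gP (n : ℕ) : Submodule K (Polynomial E) where
  carrier := {f | ∀ m, m ≠ n → f.coeff m = 0}
  add_mem' := by intro a b ha hb m hm; simp [coeff_add, ha m hm, hb m hm]
  zero_mem' := by intro m _; simp
  smul_mem' := by intro c f hf m hm; simp [coeff_smul, hf m hm]

/-- degree `n ≥ 0` piece -/
noncomputable def gF (n : ℕ) : Submodule K (W × V × Polynomial E) :=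
  (⊥ : Submodule K W).prod ((⊥ : Submodule K V).prod (gP n))

/-- the full grading -/
noncomputable def gr : ℤ → Submodule K (W × V × Polynomial E) := fun i =>
  match i with
  | Int.ofNat n => gF n
  | Int.negSucc 0 => gV
  | Int.negSucc 1 => gW
  | Int.negSucc _ => ⊥

lemma mem_gW (x : W × V × Polynomial E) : x ∈ (gW : Submodule K _) ↔ x.2.1 = 0 ∧ x.2.2 = 0 := by
  simp [gW, Submodule.mem_prod, Prod.ext_iff]

lemma mem_gV (x : W × V × Polynomial E) : x ∈ (gV : Submodule K _) ↔ x.1 = 0 ∧ x.2.2 = 0 := by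
  simp [gV, Submodule.mem_prod, Prod.ext_iff]

lemma mem_gF (n : ℕ) (x : W × V × Polynomial E) :
    x ∈ (gF n : Submodule K _) ↔ x.1 = 0 ∧ x.2.1 = 0 ∧ ∀ m, m ≠ n → x.2.2.coeff m = 0 := by
  simp only [gF, gP, Submodule.mem_prod, Submodule.mem_bot, Submodule.mem_mk,
    AddSubmonoid.mem_mk, AddSubsemigroup.mem_mk, Set.mem_setOf_eq]
  exact Iff.rfl


private lemma br_left_zero (x y : W × V × Polynomial E) (h1 : x.2.1 = 0) (h2 : x.2.2 = 0) :
    br lam ze xi x y = 0 := by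
  simp [br, h1, h2, Prod.ext_iff]

private lemma br_right_zero (x y : W × V × Polynomial E) (h1 : y.2.1 = 0) (h2 : y.2.2 = 0) :
    br lam ze xi x y = 0 := by
  simp [br, h1, h2, Prod.ext_iff]

private lemma divX_eq_zero_of_supp0 (f : Polynomial E) (hf : ∀ m, m ≠ 0 → f.coeff m = 0) :
    f.divX = 0 := by
  ext m; rw [coeff_divX, coeff_zero]; exact hf (m+1) (Nat.succ_ne_zero m)

private lemma br_grading (i j : ℤ) (x y : W × V × Polynomial E)
    (hx : x ∈ gr (K := K) i) (hy : y ∈ gr (K := K) j) :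
    br lam ze xi x y ∈ gr (K := K) (i + j) := by
  -- dispose of cases where one side is in gW or ⊥ : bracket is zero
  rcases i with n | n
  case negSucc =>
    rcases n with _ | _ | n
    · -- i = -1, x ∈ gV
      rw [show gr (K := K) (Int.negSucc 0) = gV from rfl, mem_gV] at hx
      rcases j with m | m
      case negSucc =>
        rcases m with _ | _ | m
        · -- j = -1 : target gW at -2
          rw [show (Int.negSucc 0 + Int.negSucc 0 : ℤ) = Int.negSucc 1 by rfl]
          rw [show gr (K := K) (Int.negSucc 0) = gV from rfl, mem_gV] at hy
          rw [show (gr (K := K) (Int.negSucc 1)) = gW from rfl, mem_gW]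
          constructor
          · show ze (x.2.2.coeff 0 * xi y.2.1 - y.2.2.coeff 0 * xi x.2.1) = 0
            rw [hx.2, hy.2]; simp
          · show xi y.2.1 • x.2.2.divX - xi x.2.1 • y.2.2.divX = 0
            rw [hx.2, hy.2]; simp
        · -- j = -2 : y ∈ gW, bracket zero
          rw [show gr (K := K) (Int.negSucc (0+1)) = gW from rfl, mem_gW] at hy
          rw [br_right_zero lam ze xi x y hy.1 hy.2]
          exact Submodule.zero_mem _
        · -- j < -2 : y = 0
          have : y = 0 := by exact (Submodule.mem_bot K).mp hy
          rw [this, br_right_zero lam ze xi x 0 rfl rfl]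
          exact Submodule.zero_mem _
      case ofNat =>
        -- j = m ≥ 0, x ∈ gV, y ∈ gF m
        rw [show gr (K := K) (Int.ofNat m) = gF m from rfl, mem_gF] at hy
        rcases m with _ | m
        · -- m = 0 : target gV
          rw [show (Int.negSucc 0 + Int.ofNat 0 : ℤ) = Int.negSucc 0 by rfl]
          rw [show (gr (K := K) (Int.negSucc 0)) = gV from rfl, mem_gV]
          constructor
          · show lam x.2.1 y.2.1 = 0
            rw [hy.2.1]; simp
          · show xi y.2.1 • x.2.2.divX - xi x.2.1 • y.2.2.divX = 0
            rw [hx.2, divX_eq_zero_of_supp0 y.2.2 hy.2.2]; simp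
        · -- m+1 : target gF m
          rw [show (Int.negSucc 0 + Int.ofNat (m+1) : ℤ) = Int.ofNat m by
            simp [Int.negSucc_eq]]
          rw [show (gr (K := K) (Int.ofNat m)) = gF m from rfl, mem_gF]
          refine ⟨?_, ?_, ?_⟩
          · show lam x.2.1 y.2.1 = 0
            rw [hy.2.1]; simp
          · show ze (x.2.2.coeff 0 * xi y.2.1 - y.2.2.coeff 0 * xi x.2.1) = 0
            rw [hx.2, hy.2.1, hy.2.2 0 (by omega)]; simp
          · intro k hk
            show (xi y.2.1 • x.2.2.divX - xi x.2.1 • y.2.2.divX).coeff k = 0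
            simp [hx.2, hy.2.1, coeff_sub, coeff_smul, coeff_divX,
              hy.2.2 (k+1) (show k+1 ≠ m+1 by omega)]
    · -- i = -2 : x ∈ gW, bracket zero
      rw [show gr (K := K) (Int.negSucc (0+1)) = gW from rfl, mem_gW] at hx
      rw [br_left_zero lam ze xi x y hx.1 hx.2]
      exact Submodule.zero_mem _
    · -- i < -2 : x = 0
      have : x = 0 := by exact (Submodule.mem_bot K).mp hx
      rw [this, br_left_zero lam ze xi 0 y rfl rfl]
      exact Submodule.zero_mem _
  case ofNat =>
    -- i = n ≥ 0, x ∈ gF n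
    rw [show gr (K := K) (Int.ofNat n) = gF n from rfl, mem_gF] at hx
    rcases j with m | m
    case ofNat =>
      -- both nonneg : bracket zero
      have : br lam ze xi x y = 0 := by
        rw [show gr (K := K) (Int.ofNat m) = gF m from rfl, mem_gF] at hy
        refine Prod.ext ?_ (Prod.ext ?_ ?_)
        · show lam x.2.1 y.2.1 = 0
          rw [hx.2.1]; simp
        · show ze (x.2.2.coeff 0 * xi y.2.1 - y.2.2.coeff 0 * xi x.2.1) = 0
          rw [hx.2.1, hy.2.1]; simp
        · show xi y.2.1 • x.2.2.divX - xi x.2.1 • y.2.2.divX = 0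
          rw [hx.2.1, hy.2.1]; simp
      rw [this]; exact Submodule.zero_mem _
    case negSucc =>
      rcases m with _ | _ | m
      · -- j = -1, y ∈ gV
        rw [show gr (K := K) (Int.negSucc 0) = gV from rfl, mem_gV] at hy
        rcases n with _ | n
        · rw [show (Int.ofNat 0 + Int.negSucc 0 : ℤ) = Int.negSucc 0 by rfl]
          rw [show (gr (K := K) (Int.negSucc 0)) = gV from rfl, mem_gV]
          constructor
          · show lam x.2.1 y.2.1 = 0
            rw [hx.2.1]; simp
          · show xi y.2.1 • x.2.2.divX - xi x.2.1 • y.2.2.divX = 0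
            rw [hx.2.1, divX_eq_zero_of_supp0 x.2.2 hx.2.2, hy.2]; simp
        · rw [show (Int.ofNat (n+1) + Int.negSucc 0 : ℤ) = Int.ofNat n by
            simp [Int.negSucc_eq]]
          rw [show (gr (K := K) (Int.ofNat n)) = gF n from rfl, mem_gF]
          refine ⟨?_, ?_, ?_⟩
          · show lam x.2.1 y.2.1 = 0
            rw [hx.2.1]; simp
          · show ze (x.2.2.coeff 0 * xi y.2.1 - y.2.2.coeff 0 * xi x.2.1) = 0
            rw [hx.2.1, hy.2, hx.2.2 0 (by omega)]; simp
          · intro k hk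
            show (xi y.2.1 • x.2.2.divX - xi x.2.1 • y.2.2.divX).coeff k = 0
            simp [hx.2.1, hy.2, coeff_sub, coeff_smul, coeff_divX,
              hx.2.2 (k+1) (show k+1 ≠ n+1 by omega)]
      · -- j = -2
        rw [show gr (K := K) (Int.negSucc (0+1)) = gW from rfl, mem_gW] at hy
        rw [br_right_zero lam ze xi x y hy.1 hy.2]
        exact Submodule.zero_mem _
      · have : y = 0 := by exact (Submodule.mem_bot K).mp hy
        rw [this, br_right_zero lam ze xi x 0 rfl rfl]
        exact Submodule.zero_mem _

private noncomputable def inW : W →ₗ[K] W × V × Polynomial E := LinearMap.inl K W (V × Polynomial E)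
private noncomputable def inV : V →ₗ[K] W × V × Polynomial E :=
  (LinearMap.inr K W (V × Polynomial E)).comp (LinearMap.inl K V (Polynomial E))
private noncomputable def inP : Polynomial E →ₗ[K] W × V × Polynomial E :=
  (LinearMap.inr K W (V × Polynomial E)).comp (LinearMap.inr K V (Polynomial E))

private noncomputable def prW : W × V × Polynomial E →ₗ[K] W := LinearMap.fst K W (V × Polynomial E)
private noncomputable def prV : W × V × Polynomial E →ₗ[K] V :=
  (LinearMap.fst K V (Polynomial E)).comp (LinearMap.snd K W (V × Polynomial E))
private noncomputable def cf (n : ℕ) : W × V × Polynomial E →ₗ[K] E :=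
  ((Polynomial.lcoeff E n).restrictScalars K).comp
    ((LinearMap.snd K V (Polynomial E)).comp (LinearMap.snd K W (V × Polynomial E)))

private lemma gr_sup_top : iSup (gr (K := K) (V := V) (W := W) (E := E)) = ⊤ := by
  rw [eq_top_iff]
  rintro ⟨w, v, f⟩ -
  have h1 : ((w, 0, 0) : W × V × Polynomial E) ∈ ⨆ i, gr (K := K) i :=
    Submodule.mem_iSup_of_mem (Int.negSucc 1)
      (by rw [show gr (K := K) (Int.negSucc 1) = gW from rfl, mem_gW]; exact ⟨rfl, rfl⟩)
  have h2 : ((0, v, 0) : W × V × Polynomial E) ∈ ⨆ i, gr (K := K) i :=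
    Submodule.mem_iSup_of_mem (Int.negSucc 0)
      (by rw [show gr (K := K) (Int.negSucc 0) = gV from rfl, mem_gV]; exact ⟨rfl, rfl⟩)
  have h3 : ∀ g : Polynomial E, ((0, 0, g) : W × V × Polynomial E) ∈ ⨆ i, gr (K := K) i := by
    intro g
    induction g using Polynomial.induction_on' with
    | add p q hp hq =>
        have : ((0, 0, p + q) : W × V × Polynomial E) = (0, 0, p) + (0, 0, q) := by
          simp [Prod.ext_iff]
        rw [this]; exact Submodule.add_mem _ hp hq
    | monomial n a =>
        refine Submodule.mem_iSup_of_mem (Int.ofNat n) ?_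
        rw [show gr (K := K) (Int.ofNat n) = gF n from rfl, mem_gF]
        refine ⟨rfl, rfl, fun m hm => ?_⟩
        simp [coeff_monomial, Ne.symm hm]
  have : ((w, v, f) : W × V × Polynomial E) = (w, 0, 0) + (0, v, 0) + (0, 0, f) := by
    simp [Prod.ext_iff]
  rw [this]
  exact Submodule.add_mem _ (Submodule.add_mem _ h1 h2) (h3 f)

private lemma gr_indep : iSupIndep (gr (K := K) (V := V) (W := W) (E := E)) := by
  intro i
  rcases i with n | n
  case ofNat =>
    refine Disjoint.mono_right (iSup_le fun j => iSup_le fun hj x hx => ?_)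
      ((Submodule.disjoint_def).mpr fun x hx hx' => ?_ :
        Disjoint (gr (K := K) (Int.ofNat n)) (LinearMap.ker (cf (K := K) n)))
    · -- every other piece is inside ker (cf n)
      show x ∈ LinearMap.ker (cf (K := K) n)
      rw [LinearMap.mem_ker]
      rcases j with m | m
      case ofNat =>
        rw [show gr (K := K) (Int.ofNat m) = gF m from rfl, mem_gF] at hx
        have hnm : n ≠ m := fun h => hj (by rw [h])
        exact hx.2.2 n hnm
      case negSucc =>
        rcases m with _ | _ | m
        · rw [show gr (K := K) (Int.negSucc 0) = gV from rfl, mem_gV] at hx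
          show x.2.2.coeff n = 0
          rw [hx.2]; simp
        · rw [show gr (K := K) (Int.negSucc 1) = gW from rfl, mem_gW] at hx
          show x.2.2.coeff n = 0
          rw [hx.2]; simp
        · have : x = 0 := by exact (Submodule.mem_bot K).mp hx
          rw [this]; simp
    · -- gr n ∩ ker (cf n) = 0
      rw [show gr (K := K) (Int.ofNat n) = gF n from rfl, mem_gF] at hx
      rw [LinearMap.mem_ker] at hx'
      have hf : x.2.2 = 0 := by
        ext m
        rcases eq_or_ne m n with rfl | hm
        · exact hx'
        · exact hx.2.2 m hm
      obtain ⟨x1, x2, x3⟩ := x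
      simp only [Prod.ext_iff]
      exact ⟨hx.1, hx.2.1, hf⟩
  case negSucc =>
    rcases n with _ | _ | n
    · -- i = -1
      refine Disjoint.mono_right (iSup_le fun j => iSup_le fun hj x hx => ?_)
        ((Submodule.disjoint_def).mpr fun x hx hx' => ?_ :
          Disjoint (gr (K := K) (Int.negSucc 0)) (LinearMap.ker (prV (K := K))))
      · show x ∈ LinearMap.ker (prV (K := K))
        rw [LinearMap.mem_ker]
        rcases j with m | m
        case ofNat =>
          rw [show gr (K := K) (Int.ofNat m) = gF m from rfl, mem_gF] at hx
          exact hx.2.1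
        case negSucc =>
          rcases m with _ | _ | m
          · exact absurd rfl hj
          · rw [show gr (K := K) (Int.negSucc 1) = gW from rfl, mem_gW] at hx
            exact hx.1
          · have : x = 0 := by exact (Submodule.mem_bot K).mp hx
            rw [this]; simp
      · rw [show gr (K := K) (Int.negSucc 0) = gV from rfl, mem_gV] at hx
        rw [LinearMap.mem_ker] at hx'
        obtain ⟨x1, x2, x3⟩ := x
        simp only [Prod.ext_iff]
        exact ⟨hx.1, hx', hx.2⟩
    · -- i = -2
      refine Disjoint.mono_right (iSup_le fun j => iSup_le fun hj x hx => ?_)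
        ((Submodule.disjoint_def).mpr fun x hx hx' => ?_ :
          Disjoint (gr (K := K) (Int.negSucc 1)) (LinearMap.ker (prW (K := K))))
      · show x ∈ LinearMap.ker (prW (K := K))
        rw [LinearMap.mem_ker]
        rcases j with m | m
        case ofNat =>
          rw [show gr (K := K) (Int.ofNat m) = gF m from rfl, mem_gF] at hx
          exact hx.1
        case negSucc =>
          rcases m with _ | _ | m
          · rw [show gr (K := K) (Int.negSucc 0) = gV from rfl, mem_gV] at hx
            exact hx.1
          · exact absurd rfl hj
          · have : x = 0 := by exact (Submodule.mem_bot K).mp hx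
            rw [this]; simp
      · rw [show gr (K := K) (Int.negSucc 1) = gW from rfl, mem_gW] at hx
        rw [LinearMap.mem_ker] at hx'
        obtain ⟨x1, x2, x3⟩ := x
        simp only [Prod.ext_iff]
        exact ⟨hx', hx.1, hx.2⟩
    · -- i < -2 : the piece is ⊥
      have : gr (K := K) (V := V) (W := W) (E := E) (Int.negSucc (n+2)) = ⊥ := rfl
      rw [this]
      exact disjoint_bot_left

private lemma gr_internal : DirectSum.IsInternal (gr (K := K) (V := V) (W := W) (E := E)) :=
  DirectSum.isInternal_submodule_of_iSupIndep_of_iSup_eq_top gr_indep gr_sup_top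

include halt hxz hsym in
theorem core_exists (hzi : Function.Injective ze) (hxine : ∃ v : V, xi v ≠ 0) :
    ∃ S : EffProlong K V W lam, ¬ S.FinDim := by
  obtain ⟨v0, hv0⟩ := hxine
  letI instLR : LieRing (W × V × Polynomial E) := coreLieRing lam ze xi halt hxz hsym
  letI instLA : LieAlgebra K (W × V × Polynomial E) :=
    coreLieAlgebra lam ze xi halt hxz hsym
  refine ⟨{ L := W × V × Polynomial E
            g := gr
            internal := gr_internal
            grading := fun i j x hx y hy => br_grading lam ze xi i j x y hx hy
            bounded := ?_
            e1 := inV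
            e2 := inW
            e1_inj := ?_
            e2_inj := ?_
            e1_range := ?_
            e2_range := ?_
            bracket_eq := ?_
            effective := ?_ }, ?_⟩
  · -- bounded
    intro p hp
    rcases p with n | n
    case ofNat => rw [Int.ofNat_eq_natCast] at hp; omega
    case negSucc =>
      rcases n with _ | _ | k
      · exfalso; rw [Int.negSucc_eq] at hp; omega
      · exfalso; rw [Int.negSucc_eq] at hp; omega
      · rfl
  · -- e1_inj
    intro a b h
    exact congrArg (fun t : W × V × Polynomial E => t.2.1) h
  · -- e2_inj
    intro a b h
    exact congrArg (fun t : W × V × Polynomial E => t.1) h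
  · -- e1_range
    show LinearMap.range (inV (K := K)) = gr (Int.negSucc 0)
    rw [show gr (K := K) (Int.negSucc 0) = gV from rfl]
    ext x
    rw [mem_gV, LinearMap.mem_range]
    constructor
    · rintro ⟨v, rfl⟩; exact ⟨rfl, rfl⟩
    · rintro ⟨h1, h2⟩
      exact ⟨x.2.1, Prod.ext h1.symm (Prod.ext rfl h2.symm)⟩
  · -- e2_range
    show LinearMap.range (inW (K := K)) = gr (Int.negSucc 1)
    rw [show gr (K := K) (Int.negSucc 1) = gW from rfl]
    ext x
    rw [mem_gW, LinearMap.mem_range]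
    constructor
    · rintro ⟨w, rfl⟩; exact ⟨rfl, rfl⟩
    · rintro ⟨h1, h2⟩
      exact ⟨x.1, Prod.ext rfl (Prod.ext h1.symm h2.symm)⟩
  · -- bracket_eq
    intro v w
    show br lam ze xi ((0 : W), v, (0 : Polynomial E)) ((0 : W), w, (0 : Polynomial E)) =
      ((lam v w, 0, 0) : W × V × Polynomial E)
    refine Prod.ext rfl (Prod.ext ?_ ?_)
    · show ze ((0 : Polynomial E).coeff 0 * xi w - (0 : Polynomial E).coeff 0 * xi v) = 0
      simp
    · show xi w • (0 : Polynomial E).divX - xi v • (0 : Polynomial E).divX = 0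
      simp
  · -- effective
    intro p hp x hx hbr
    rcases p with n | n
    case negSucc => exfalso; rw [Int.negSucc_eq] at hp; omega
    case ofNat =>
      rw [show gr (K := K) (Int.ofNat n) = gF n from rfl] at hx
      replace hx := (mem_gF (K := K) n x).mp hx
      have hb := hbr v0
      have hV : ze (x.2.2.coeff 0 * xi v0 - (0 : Polynomial E).coeff 0 * xi x.2.1) = 0 :=
        congrArg (fun t : W × V × Polynomial E => t.2.1) hb
      have hP : xi v0 • x.2.2.divX - xi x.2.1 • (0 : Polynomial E).divX = 0 :=
        congrArg (fun t : W × V × Polynomial E => t.2.2) hb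
      rw [hx.2.1] at hV hP
      simp only [coeff_zero, map_zero, zero_mul, sub_zero, zero_smul, divX_zero,
        smul_zero] at hV hP
      have hc0 : x.2.2.coeff 0 = 0 := by
        have := hzi (show ze (x.2.2.coeff 0 * xi v0) = ze 0 by rw [map_zero]; exact hV)
        rcases mul_eq_zero.mp this with h | h
        · exact h
        · exact absurd h hv0
      have hdX : x.2.2.divX = 0 := by
        rcases smul_eq_zero.mp hP with h | h
        · exact absurd h hv0
        · exact h
      have hf : x.2.2 = 0 := by
        rw [← x.2.2.divX_mul_X_add, hdX, hc0]; simp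
      obtain ⟨x1, x2, x3⟩ := x
      exact Prod.ext hx.1 (Prod.ext hx.2.1 hf)
  · -- not finite dimensional
    intro hfd
    have hmf : Module.Finite K (W × V × Polynomial E) := hfd
    have hinj : Function.Injective (inP (K := K) (V := V) (W := W) (E := E)) := by
      intro a b h
      exact congrArg (fun t : W × V × Polynomial E => t.2.2) h
    have : FiniteDimensional K (Polynomial E) := FiniteDimensional.of_injective _ hinj
    have : Module.Finite E (Polynomial E) :=
      Module.Finite.of_restrictScalars_finite K E (Polynomial E)
    exact Polynomial.not_finite this

include halt hxz hsym in
theorem core_exists' (hzi : Function.Injective ze) (hxine : ∃ v : V, xi v ≠ 0) :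
    ∃ S : EffProlong K V W lam, ¬ S.FinDim :=
  core_exists lam ze xi halt hxz hsym hzi hxine
end Core

section Inst
variable {K V W : Type} [Field K] [AddCommGroup V] [Module K V]
  [AddCommGroup W] [Module K W]
variable (lam : V →ₗ[K] V →ₗ[K] W)

theorem exists_of_pointed (halt : ∀ v : V, lam v v = 0) (z : V) (hz : z ≠ 0)
    (xi0 : V →ₗ[K] K) (hxi0 : ∃ v, xi0 v ≠ 0) (hxz : xi0 z = 0) (w0 : W)
    (hlam : ∀ v, lam z v = xi0 v • w0) :
    ∃ S : EffProlong K V W lam, ¬ S.FinDim := by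
  refine core_exists lam (LinearMap.toSpanSingleton K V z) xi0 halt ?_ ?_ ?_ hxi0
  · intro γ
    rw [LinearMap.toSpanSingleton_apply, map_smul, hxz, smul_zero]
  · intro α u v
    rw [LinearMap.toSpanSingleton_apply, LinearMap.toSpanSingleton_apply,
      map_smul, map_smul, LinearMap.smul_apply, LinearMap.smul_apply, hlam u, hlam v,
      smul_smul, smul_smul]
    congr 1
    ring
  · intro a b hab
    have h : (a - b) • z = 0 := by
      rw [sub_smul, sub_eq_zero]
      exact hab
    rcases smul_eq_zero.mp h with h' | h'
    · exact sub_eq_zero.mp h'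
    · exact absurd h' hz


lemma exists_functional [FiniteDimensional K V] (z u : V)
    (hu : u ∉ Submodule.span K {z}) :
    ∃ f : V →ₗ[K] K, f z = 0 ∧ f u ≠ 0 := by
  set N := Submodule.span K {z} with hN
  have hπu : N.mkQ u ≠ 0 := by
    rw [Submodule.mkQ_apply, ne_eq, Submodule.Quotient.mk_eq_zero]
    exact hu
  let B := Module.Free.chooseBasis K (V ⧸ N)
  have hrepr : B.repr (N.mkQ u) ≠ 0 := by
    rw [ne_eq, map_eq_zero_iff _ B.repr.injective]
    exact hπu
  obtain ⟨i, hi⟩ := Finsupp.ne_iff.mp hrepr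
  refine ⟨(B.coord i).comp N.mkQ, ?_, ?_⟩
  · have : N.mkQ z = 0 := by
      rw [Submodule.mkQ_apply, Submodule.Quotient.mk_eq_zero]
      exact Submodule.mem_span_singleton_self z
    simp [this]
  · simpa [Module.Basis.coord_apply] using hi

end Inst

section Main
variable (K V W : Type) [Field K] [CharZero K]
  [AddCommGroup V] [Module K V] [FiniteDimensional K V]
  [AddCommGroup W] [Module K W] [FiniteDimensional K W]

set_option maxHeartbeats 1000000 in
set_option synthInstance.maxHeartbeats 400000 in
theorem main_theorem
    (lam : V →ₗ[K] V →ₗ[K] W)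
    (halt : ∀ v : V, lam v v = 0)
    (hsurj : ∀ w : W, w ∈ Submodule.span K {w' : W | ∃ v v' : V, w' = lam v v'})
    (hW : ∃ w : W, w ≠ 0)
    (hdim : Module.finrank K W ≤ 2) :
    ∃ S : EffProlong K V W lam, ¬ S.FinDim := by
  classical
  -- `lam` is not identically zero
  have hlam_ne : ∃ u v : V, lam u v ≠ 0 := by
    by_contra h
    push_neg at h
    obtain ⟨w, hw⟩ := hW
    have hsub : {w' : W | ∃ v v' : V, w' = lam v v'} ⊆ {0} := by
      rintro _ ⟨v, v', rfl⟩
      simp [h]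
    have := hsurj w
    have hle : Submodule.span K {w' : W | ∃ v v' : V, w' = lam v v'} ≤ ⊥ := by
      rw [← Submodule.span_zero_singleton K]
      exact Submodule.span_mono hsub
    exact hw (hle this)
  obtain ⟨u0, v0, hu0⟩ := hlam_ne
  haveI : Nontrivial W := nontrivial_of_ne _ _ (hW.choose_spec)
  have hpos : 0 < Module.finrank K W := Module.finrank_pos
  rcases (by omega : Module.finrank K W = 1 ∨ Module.finrank K W = 2) with h1 | h2
  · -- dim W = 1
    set b := Module.finBasisOfFinrankEq K W h1 with hb
    set B0 : V →ₗ[K] V →ₗ[K] K := lam.compr₂ (b.coord 0) with hB0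
    have hrep : ∀ x y : V, lam x y = B0 x y • b 0 := by
      intro x y
      have := b.sum_repr (lam x y)
      rw [Fin.sum_univ_one] at this
      rw [← this]
      simp [hB0, Module.Basis.coord_apply]
    have hne : B0 u0 v0 ≠ 0 := fun h => hu0 (by rw [hrep, h, zero_smul])
    have hz : u0 ≠ 0 := by
      rintro rfl
      simp at hne
    refine exists_of_pointed lam halt u0 hz (B0 u0) ⟨v0, hne⟩ ?_ (b 0) (fun v => hrep u0 v)
    have : lam u0 u0 = 0 := halt u0
    simp [hB0, this]
  · -- dim W = 2
    set b := Module.finBasisOfFinrankEq K W h2 with hb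
    set B0 : V →ₗ[K] V →ₗ[K] K := lam.compr₂ (b.coord 0) with hB0
    set B1 : V →ₗ[K] V →ₗ[K] K := lam.compr₂ (b.coord 1) with hB1
    have hrep : ∀ x y : V, lam x y = B0 x y • b 0 + B1 x y • b 1 := by
      intro x y
      have := b.sum_repr (lam x y)
      rw [Fin.sum_univ_two] at this
      rw [← this]
      simp [hB0, hB1, Module.Basis.coord_apply]
    by_cases hdeg : ∃ z : V, z ≠ 0 ∧ B0 z = 0
    · obtain ⟨z, hz, hBz⟩ := hdeg
      by_cases hB1z : B1 z = 0
      · -- lam z ⬝ = 0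
        have hlamz : ∀ v, lam z v = 0 := by
          intro v
          rw [hrep z v, hBz, hB1z]
          simp
        have hu0span : u0 ∉ Submodule.span K {z} := by
          intro hmem
          obtain ⟨c, rfl⟩ := Submodule.mem_span_singleton.mp hmem
          apply hu0
          rw [map_smul, LinearMap.smul_apply, hlamz, smul_zero]
        obtain ⟨f, hfz, hfu⟩ := exists_functional z u0 hu0span
        exact exists_of_pointed lam halt z hz f ⟨u0, hfu⟩ hfz 0
          (fun v => by rw [hlamz, smul_zero])
      · have hxine : ∃ v, B1 z v ≠ 0 := by
          by_contra hc
          push_neg at hc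
          exact hB1z (LinearMap.ext hc)
        refine exists_of_pointed lam halt z hz (B1 z) hxine ?_ (b 1) ?_
        · have : lam z z = 0 := halt z
          simp [hB1, this]
        · intro v
          rw [hrep z v, hBz]
          simp
    · -- B0 nondegenerate
      push_neg at hdeg
      have hsk : ∀ u v : V, lam u v = - lam v u := lam_skew lam halt
      have hB0sk : ∀ u v : V, B0 u v = - B0 v u := by
        intro u v
        rw [hB0]
        simp only [LinearMap.compr₂_apply]
        rw [hsk u v, map_neg]
      -- B0 viewed as map into the dual is bijective
      have hinj : Function.Injective (B0 : V →ₗ[K] Module.Dual K V) := by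
        intro a b h
        by_contra hne
        have : a - b ≠ 0 := sub_ne_zero.mpr hne
        exact hdeg (a - b) this (by rw [map_sub, h, sub_self])
      have hrange : LinearMap.range (B0 : V →ₗ[K] Module.Dual K V) = ⊤ := by
        apply Submodule.eq_top_of_finrank_eq
        rw [LinearMap.finrank_range_of_inj hinj, Subspace.dual_finrank_eq]
      let Beq : V ≃ₗ[K] Module.Dual K V :=
        LinearEquiv.ofBijective B0 ⟨hinj, LinearMap.range_eq_top.mp hrange⟩
      let T : Module.End K V := Beq.symm.toLinearMap ∘ₗ B1
      have hT : ∀ u : V, B0 (T u) = B1 u := by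
        intro u
        show B0 (Beq.symm (B1 u)) = B1 u
        have := Beq.apply_symm_apply (B1 u)
        exact this
      have hB1sk : ∀ u v : V, B1 u v = - B1 v u := by
        intro u v
        rw [hB1]
        simp only [LinearMap.compr₂_apply]
        rw [hsk u v, map_neg]
      have hTsym : ∀ u v : V, B0 (T u) v = B0 u (T v) := by
        intro u v
        rw [hT u]
        show (B1 u) v = _
        rw [hB1sk u v, ← hT v, hB0sk u (T v)]
      -- V is nontrivial
      have hu0ne : u0 ≠ 0 := by
        rintro rfl
        rw [map_zero] at hu0
        exact hu0 rfl
      haveI : Nontrivial V := nontrivial_of_ne u0 0 hu0ne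
      -- minimal polynomial machinery
      have hTint : IsIntegral K T := Algebra.IsIntegral.isIntegral T
      have hp0 : minpoly K T ≠ 0 := minpoly.ne_zero hTint
      have hpunit : ¬IsUnit (minpoly K T) := minpoly.not_isUnit K T
      obtain ⟨q, hqirr, hqdvd⟩ := WfDvdMonoid.exists_irreducible_factor hpunit hp0
      set U : Submodule K V := LinearMap.ker (Polynomial.aeval T q) with hU
      have hUne : U ≠ ⊥ := by
        intro hbot
        have hainj : Function.Injective (Polynomial.aeval T q) := by
          rw [← LinearMap.ker_eq_bot]
          exact hbot
        obtain ⟨r, hr⟩ := hqdvd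
        have haev : Polynomial.aeval T (minpoly K T) = 0 := minpoly.aeval K T
        rw [hr, map_mul] at haev
        have hr0 : Polynomial.aeval T r = 0 := by
          ext v
          have h1 : (Polynomial.aeval T q) ((Polynomial.aeval T r) v) = 0 := by
            rw [← Module.End.mul_apply, haev]
            rfl
          have := hainj (h1.trans (map_zero (Polynomial.aeval T q)).symm)
          simpa using this
        have hdvd2 : minpoly K T ∣ r := minpoly.dvd K T hr0
        have hrne : r ≠ 0 := by
          rintro rfl
          rw [mul_zero] at hr
          exact hp0 hr
        obtain ⟨s, hs⟩ := hdvd2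
        rw [hr] at hs
        have : 1 = q * s := by
          have h2 : r * 1 = r * (q * s) := by
            rw [mul_one]
            calc r = q * r * s := hs
            _ = r * (q * s) := by ring
          exact mul_left_cancel₀ hrne h2
        exact hqirr.not_isUnit (IsUnit.of_mul_eq_one s this.symm)
      obtain ⟨z, hzU, hz0⟩ := (Submodule.ne_bot_iff U).mp hUne
      haveI : Fact (Irreducible q) := ⟨hqirr⟩
      haveI : Module.Finite K (AdjoinRoot q) := (AdjoinRoot.powerBasis hqirr.ne_zero).finite
      -- T preserves U
      have hTU : ∀ x ∈ U, T x ∈ U := by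
        intro x hx
        rw [hU, LinearMap.mem_ker] at hx ⊢
        have hcomm : Polynomial.aeval T q * T = T * Polynomial.aeval T q := by
          have h1 : Polynomial.aeval T (q * Polynomial.X) =
              Polynomial.aeval T (Polynomial.X * q) := by rw [mul_comm]
          rw [map_mul, map_mul, Polynomial.aeval_X] at h1
          exact h1
        calc (Polynomial.aeval T q) (T x) = (Polynomial.aeval T q * T) x := rfl
          _ = (T * Polynomial.aeval T q) x := by rw [hcomm]
          _ = T ((Polynomial.aeval T q) x) := rfl
          _ = T 0 := by rw [hx]
          _ = 0 := map_zero T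
      set Tu : Module.End K U := T.restrict hTU with hTu
      -- coercion compatibility for polynomial evaluation
      have haux : ∀ (s : Polynomial K) (x : U),
          ((Polynomial.aeval Tu s x : U) : V) = Polynomial.aeval T s (x : V) := by
        intro s
        induction s using Polynomial.induction_on' with
        | add p r hp hr =>
            intro x
            rw [map_add, map_add]
            simp only [LinearMap.add_apply, Submodule.coe_add, hp x, hr x]
        | monomial n a =>
            intro x
            rw [Polynomial.aeval_monomial, Polynomial.aeval_monomial]
            simp only [Module.End.mul_apply, Module.algebraMap_end_apply]
            rw [Module.End.pow_restrict n hTU]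
            simp only [Module.algebraMap_end_apply, SetLike.val_smul]
            congr 1
      have hTuq : Polynomial.aeval Tu q = 0 := by
        ext x
        have h1 : ((Polynomial.aeval Tu q x : U) : V) = Polynomial.aeval T q (x : V) :=
          haux q x
        have h2 : Polynomial.aeval T q (x : V) = 0 := LinearMap.mem_ker.mp x.2
        have : ((Polynomial.aeval Tu q x : U) : V) = 0 := h1.trans h2
        simpa using this
      -- the ring homomorphism E → End(U)
      have hker : ∀ a ∈ Ideal.span ({q} : Set (Polynomial K)),
          (Polynomial.aeval Tu).toRingHom a = 0 := by
        intro a ha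
        obtain ⟨c, hc⟩ := Ideal.mem_span_singleton'.mp ha
        simp only [AlgHom.toRingHom_eq_coe, RingHom.coe_coe]
        rw [← hc, map_mul, hTuq, mul_zero]
      set ψ : AdjoinRoot q →+* Module.End K ↥U :=
        Ideal.Quotient.lift (Ideal.span {q}) (Polynomial.aeval Tu).toRingHom hker with hψ
      have hψmk : ∀ s : Polynomial K, ψ (AdjoinRoot.mk q s) = Polynomial.aeval Tu s := by
        intro s
        exact Ideal.Quotient.lift_mk _ _ _
      set z' : ↥U := ⟨z, hzU⟩ with hz'
      set ze : AdjoinRoot q →ₗ[K] V :=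
        { toFun := fun γ => ((ψ γ) z' : V)
          map_add' := by
            intro a b
            show ((ψ (a + b)) z' : V) = ((ψ a) z' : V) + ((ψ b) z' : V)
            rw [map_add]
            rfl
          map_smul' := by
            intro c γ
            show ((ψ (c • γ)) z' : V) = c • ((ψ γ) z' : V)
            rw [Algebra.smul_def, map_mul]
            have halg : ψ (algebraMap K (AdjoinRoot q) c) = algebraMap K (Module.End K ↥U) c := by
              have h1 : algebraMap K (AdjoinRoot q) c = AdjoinRoot.mk q (Polynomial.C c) := by
                rw [AdjoinRoot.algebraMap_eq]
                rfl
              rw [h1, hψmk, Polynomial.aeval_C]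
            rw [halg]
            show ((algebraMap K (Module.End K ↥U) c * ψ γ) z' : V) = _
            rw [Module.End.mul_apply, Module.algebraMap_end_apply]
            rfl } with hzedef
      have hze_mk : ∀ s : Polynomial K, ze (AdjoinRoot.mk q s) = Polynomial.aeval T s z := by
        intro s
        show ((ψ (AdjoinRoot.mk q s)) z' : V) = _
        rw [hψmk, haux]
      have hze1 : ze 1 = z := by
        have h1 : (1 : AdjoinRoot q) = AdjoinRoot.mk q 1 := map_one (AdjoinRoot.mk q) |>.symm
        rw [h1, hze_mk, map_one, Module.End.one_apply]
      have hzezero : ∀ γ : AdjoinRoot q, ze γ = 0 → γ = 0 := by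
        intro γ h
        by_contra hγ
        have h1 : (ψ γ) z' = 0 := by
          apply Subtype.coe_injective
          exact h
        have h2 : z' = 0 := by
          have h3 : ψ (γ⁻¹ * γ) z' = 0 := by
            rw [map_mul, Module.End.mul_apply, h1, map_zero]
          rwa [inv_mul_cancel₀ hγ, map_one, Module.End.one_apply] at h3
        apply hz0
        have := congrArg Subtype.val h2
        exact this
      have hzeinj : Function.Injective ze := by
        intro a b hab
        have h : ze (a - b) = 0 := by rw [map_sub, hab, sub_self]
        exact sub_eq_zero.mp (hzezero _ h)
      -- the nondegenerate trace-like pairing on E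
      set B : Module.Basis _ K (AdjoinRoot q) := Module.Free.chooseBasis K (AdjoinRoot q) with hBdef
      have hrepr1 : B.repr 1 ≠ 0 := by
        rw [ne_eq, map_eq_zero_iff _ B.repr.injective]
        exact one_ne_zero
      obtain ⟨i0, hi0⟩ := Finsupp.ne_iff.mp hrepr1
      set τ : AdjoinRoot q →ₗ[K] K := B.coord i0 with hτdef
      set e0 : AdjoinRoot q := 1 with he0def
      have he0 : τ e0 ≠ 0 := by
        simpa [hτdef, he0def, Module.Basis.coord_apply] using hi0
      set J : AdjoinRoot q →ₗ[K] Module.Dual K (AdjoinRoot q) := (LinearMap.mul K (AdjoinRoot q)).compr₂ τ with hJdef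
      have hJapp : ∀ γ δ : AdjoinRoot q, J γ δ = τ (γ * δ) := fun γ δ => rfl
      have hJzero : ∀ γ : AdjoinRoot q, J γ = 0 → γ = 0 := by
        intro γ h
        by_contra hγ
        have h1 : J γ (γ⁻¹ * e0) = 0 := by rw [h]; rfl
        rw [hJapp, mul_inv_cancel_left₀ hγ] at h1
        exact he0 h1
      have hJinj : Function.Injective J := by
        intro a b hab
        have h : J (a - b) = 0 := by rw [map_sub, hab, sub_self]
        exact sub_eq_zero.mp (hJzero _ h)
      have hJrange : LinearMap.range J = ⊤ := by
        apply Submodule.eq_top_of_finrank_eq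
        rw [LinearMap.finrank_range_of_inj hJinj, Subspace.dual_finrank_eq]
      set Jeq : AdjoinRoot q ≃ₗ[K] Module.Dual K (AdjoinRoot q) :=
        LinearEquiv.ofBijective J ⟨hJinj, LinearMap.range_eq_top.mp hJrange⟩ with hJeq
      set Φ : V →ₗ[K] Module.Dual K (AdjoinRoot q) :=
        { toFun := fun v => (B0.flip v) ∘ₗ ze
          map_add' := by
            intro a b
            ext γ
            simp [LinearMap.flip_apply]
          map_smul' := by
            intro c a
            ext γ
            simp [LinearMap.flip_apply] } with hΦdef
      have hΦapp : ∀ (v : V) (γ : AdjoinRoot q), Φ v γ = B0 (ze γ) v := fun v γ => rfl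
      set xi : V →ₗ[K] AdjoinRoot q := Jeq.symm.toLinearMap ∘ₗ Φ with hxidef
      have hJxi : ∀ v : V, J (xi v) = Φ v := by
        intro v
        show J (Jeq.symm (Φ v)) = Φ v
        have := Jeq.apply_symm_apply (Φ v)
        exact this
      have hP1 : ∀ (γ : AdjoinRoot q) (v : V), τ (xi v * γ) = B0 (ze γ) v := by
        intro γ v
        have := LinearMap.congr_fun (hJxi v) γ
        rwa [hJapp, hΦapp] at this
      have hP1' : ∀ (γ : AdjoinRoot q) (v : V), τ (γ * xi v) = B0 (ze γ) v := by
        intro γ v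
        rw [mul_comm]
        exact hP1 γ v
      -- self-adjointness of polynomials in T
      have hTn : ∀ (n : ℕ) (u v : V), B0 ((T^n) u) v = B0 u ((T^n) v) := by
        intro n
        induction n with
        | zero => intro u v; simp
        | succ n ih =>
            intro u v
            conv_lhs => rw [pow_succ]
            conv_rhs => rw [pow_succ']
            rw [Module.End.mul_apply, Module.End.mul_apply, ih (T u) v, hTsym u]
      have sadj : ∀ (s : Polynomial K) (u v : V),
          B0 (Polynomial.aeval T s u) v = B0 u (Polynomial.aeval T s v) := by
        intro s
        induction s using Polynomial.induction_on' with
        | add p r hp hr =>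
            intro u v
            rw [map_add]
            simp only [LinearMap.add_apply, map_add]
            rw [hp u v, hr u v]
        | monomial n a =>
            intro u v
            rw [Polynomial.aeval_monomial]
            simp only [Module.End.mul_apply, Module.algebraMap_end_apply, map_smul,
              LinearMap.smul_apply]
            rw [hTn n u v]
      have horth : ∀ γ δ : AdjoinRoot q, B0 (ze γ) (ze δ) = 0 := by
        intro γ δ
        obtain ⟨s, rfl⟩ := AdjoinRoot.mk_surjective γ
        obtain ⟨t, rfl⟩ := AdjoinRoot.mk_surjective δ
        rw [hze_mk, hze_mk, sadj]
        have hcomp : Polynomial.aeval T s (Polynomial.aeval T t z) =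
            Polynomial.aeval T (s * t) z := by
          rw [map_mul]
          rfl
        rw [hcomp]
        have h1 := sadj (s*t) z z
        have h2 := hB0sk (Polynomial.aeval T (s*t) z) z
        have hc : B0 z (Polynomial.aeval T (s*t) z) =
            - B0 z (Polynomial.aeval T (s*t) z) := h1.symm.trans h2
        have h3 : (2 : K) * B0 z (Polynomial.aeval T (s*t) z) = 0 := by
          rw [two_mul]
          exact add_eq_zero_iff_eq_neg.mpr hc
        rcases mul_eq_zero.mp h3 with h | h
        · exact absurd h two_ne_zero
        · exact h
      have hxz : ∀ γ : AdjoinRoot q, xi (ze γ) = 0 := by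
        intro γ
        have hΦ0 : Φ (ze γ) = 0 := by
          ext δ
          rw [hΦapp]
          exact (horth δ γ).trans rfl
        show Jeq.symm (Φ (ze γ)) = 0
        rw [hΦ0, map_zero]
      have hTze : ∀ γ : AdjoinRoot q, T (ze γ) = ze (AdjoinRoot.root q * γ) := by
        intro γ
        obtain ⟨s, rfl⟩ := AdjoinRoot.mk_surjective γ
        have h1 : AdjoinRoot.root q * AdjoinRoot.mk q s = AdjoinRoot.mk q (Polynomial.X * s) := by
          rw [← AdjoinRoot.mk_X, ← map_mul]
        rw [h1, hze_mk, hze_mk, map_mul, Polynomial.aeval_X]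
        rfl
      have hsymm : ∀ (α : AdjoinRoot q) (u v : V), lam (ze (α * xi u)) v = lam (ze (α * xi v)) u := by
        intro α u v
        rw [hrep (ze (α * xi u)) v, hrep (ze (α * xi v)) u]
        have eB0 : ∀ (a c : V), B0 (ze (α * xi a)) c = τ (α * xi a * xi c) := by
          intro a c
          rw [← hP1' (α * xi a) c]
        have eB1 : ∀ (a c : V), B1 (ze (α * xi a)) c =
            τ (AdjoinRoot.root q * (α * xi a) * xi c) := by
          intro a c
          have h1 := LinearMap.congr_fun (hT (ze (α * xi a))) c
          rw [← h1, hTze, ← hP1' (AdjoinRoot.root q * (α * xi a)) c]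
        rw [eB0, eB0, eB1, eB1,
          show α * xi u * xi v = α * xi v * xi u from by ring,
          show AdjoinRoot.root q * (α * xi u) * xi v
            = AdjoinRoot.root q * (α * xi v) * xi u from by ring]
      have hxine : ∃ v : V, xi v ≠ 0 := by
        have hBz := hdeg z hz0
        have hv : ∃ v, B0 z v ≠ 0 := by
          by_contra hc
          push_neg at hc
          exact hBz (LinearMap.ext hc)
        obtain ⟨v, hv⟩ := hv
        refine ⟨v, fun h => hv ?_⟩
        have h1 := hP1 1 v
        rw [h, zero_mul, map_zero, hze1] at h1
        exact h1.symm
      exact core_exists lam ze xi halt hxz hsymm hzeinj hxine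



end Main


/-- if `m = g₋₁ ⊕ g₋₂` is a fundamental graded Lie algebra of the
second kind with `dim g₋₂ ≤ 2`, its maximal effective `gl(g₋₁)`-prolongation is
infinite dimensional; equivalently, `m` admits an infinite-dimensional effective
prolongation. -/
theorem second_kind_small_center_infinite_prolongation
    (K V W : Type) [Field K] [CharZero K]
    [AddCommGroup V] [Module K V] [FiniteDimensional K V]
    [AddCommGroup W] [Module K W] [FiniteDimensional K W]
    (lam : V →ₗ[K] V →ₗ[K] W)
    (halt : ∀ v : V, lam v v = 0)
    (hsurj : ∀ w : W, w ∈ Submodule.span K {w' : W | ∃ v v' : V, w' = lam v v'})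
    (hW : ∃ w : W, w ≠ 0)
    (hdim : Module.finrank K W ≤ 2) :
    ∃ S : EffProlong K V W lam, ¬ S.FinDim := by
  exact main_theorem K V W lam halt hsurj hW hdim
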